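/- (Splitting, algebraic case) Let A ⊆ ℂ[x₁,…,xₙ], let S be a finite set of nonzero polynomials in ℂ[x₁,…,xₙ], and let h ∈ ℂ[x₁,…,xₙ] be nonzero. Then √((A) : S^∞) = √((A ∪ {h}) : S^∞) ∩ √((A) : (S ∪ {h})^∞). -/
import Mathlib


open MvPolynomial

/-- The saturation `I : S^∞` of an ideal `I` by a set `S`. -/
def satBySet {n : ℕ} (I : Ideal (MvPolynomial (Fin n) ℂ))
    (S : Set (MvPolynomial (Fin n) ℂ)) : Set (MvPolynomial (Fin n) ℂ) :=
  {p | ∃ s ∈ Submonoid.closure S, s * p ∈ I}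

/-- The radical of a set of polynomials: all p with p^N in the set for some N. -/
def radOfSet {n : ℕ} (J : Set (MvPolynomial (Fin n) ℂ)) : Set (MvPolynomial (Fin n) ℂ) :=
  {p | ∃ N : ℕ, p ^ N ∈ J}

/-- Splitting, algebraic case:
√((A) : S^∞) = √((A ∪ {h}) : S^∞) ∩ √((A) : (S ∪ {h})^∞). -/
theorem stmt4 (n : ℕ) (A : Set (MvPolynomial (Fin n) ℂ))
    (S : Finset (MvPolynomial (Fin n) ℂ)) (hS : (0 : MvPolynomial (Fin n) ℂ) ∉ S)
    (h : MvPolynomial (Fin n) ℂ) (hh : h ≠ 0) :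
    radOfSet (satBySet (Ideal.span A) (↑S : Set (MvPolynomial (Fin n) ℂ))) =
      radOfSet (satBySet (Ideal.span (A ∪ {h})) (↑S : Set (MvPolynomial (Fin n) ℂ))) ∩
        radOfSet (satBySet (Ideal.span A) ((↑S : Set (MvPolynomial (Fin n) ℂ)) ∪ {h})) := by
  ext p
  simp only [Set.mem_inter_iff, radOfSet, satBySet, Set.mem_setOf_eq]
  constructor
  · rintro ⟨N, s, hs, hsp⟩
    exact ⟨⟨N, s, hs, Ideal.span_mono Set.subset_union_left hsp⟩,
      ⟨N, s, Submonoid.closure_mono Set.subset_union_left hs, hsp⟩⟩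
  · rintro ⟨⟨N, s, hs, hsp⟩, ⟨M, t, ht, htp⟩⟩
    have decomp : ∀ u ∈ Submonoid.closure ((↑S : Set (MvPolynomial (Fin n) ℂ)) ∪ {h}),
        ∃ s' ∈ Submonoid.closure (↑S : Set (MvPolynomial (Fin n) ℂ)), ∃ k : ℕ, u = s' * h ^ k := by
      intro u hu
      induction hu using Submonoid.closure_induction with
      | mem x hx =>
        rcases hx with hx | hx
        · exact ⟨x, Submonoid.subset_closure hx, 0, by simp⟩
        · exact ⟨1, one_mem _, 1, by simp [Set.mem_singleton_iff.mp hx]⟩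
      | one => exact ⟨1, one_mem _, 0, by simp⟩
      | mul a b _ _ ha hb =>
        obtain ⟨sa, hsa, ka, rfl⟩ := ha
        obtain ⟨sb, hsb, kb, rfl⟩ := hb
        exact ⟨sa * sb, mul_mem hsa hsb, ka + kb, by ring⟩
    obtain ⟨s', hs', k, rfl⟩ := decomp t ht
    rw [Set.union_singleton, Ideal.mem_span_insert] at hsp
    obtain ⟨z, w, hw, heq⟩ := hsp
    refine ⟨N * k + M, s' * s ^ k, mul_mem hs' (pow_mem hs k), ?_⟩
    have h1 : Ideal.Quotient.mk (Ideal.span A) (s * p ^ N)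
        = Ideal.Quotient.mk (Ideal.span A) (z * h) := by
      rw [Ideal.Quotient.eq, heq]
      simpa using hw
    have h2 : Ideal.Quotient.mk (Ideal.span A) (s' * h ^ k * p ^ M) = 0 :=
      Ideal.Quotient.eq_zero_iff_mem.mpr htp
    have key : Ideal.Quotient.mk (Ideal.span A) (s' * s ^ k * p ^ (N * k + M)) = 0 := by
      have e1 : s' * s ^ k * p ^ (N * k + M) = s' * (s * p ^ N) ^ k * p ^ M := by ring
      rw [e1, map_mul, map_mul, map_pow, h1, ← map_pow, ← map_mul, ← map_mul]
      have e2 : s' * (z * h) ^ k * p ^ M = z ^ k * (s' * h ^ k * p ^ M) := by ring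
      rw [e2, map_mul, h2, mul_zero]
    exact Ideal.Quotient.eq_zero_iff_mem.mp key
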